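/- arXiv:1911.01167 — 3 statements merged into one kernel-verified Lean document; each statement's English description precedes it below -/
import Mathlib

section
/- Let h be an exponentially distributed random variable with rate 1, and let p1, p2, λ > 0 with β = p1/p2. Then for any z with 0 ≤ z < β, the probability that (p1·h·λ)/(p2·h·λ + 1) < z equals 1 − exp(−z/((p1 − z·p2)·λ)), and for z ≥ β this probability equals 1. -/
open MeasureTheory ProbabilityTheory Real

lemma expMeasure_apply (s : Set ℝ) (hs : MeasurableSet s) :
    expMeasure 1 s = ∫⁻ x in s, exponentialPDF 1 x := by
  rw [expMeasure, gammaMeasure, withDensity_apply _ hs]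
  rfl

lemma expMeasure_Iio_zero : expMeasure 1 (Set.Iio 0) = 0 := by
  rw [expMeasure_apply _ measurableSet_Iio]
  exact lintegral_exponentialPDF_of_nonpos le_rfl

lemma expMeasure_singleton (c : ℝ) : expMeasure 1 {c} = 0 := by
  rw [expMeasure_apply _ (measurableSet_singleton c)]
  exact setLIntegral_measure_zero _ _ (measure_singleton c)

lemma expMeasure_inter_Ici (A : Set ℝ) :
    expMeasure 1 A = expMeasure 1 (A ∩ Set.Ici 0) := by
  refine le_antisymm ?_ (measure_mono Set.inter_subset_left)
  calc expMeasure 1 A ≤ expMeasure 1 ((A ∩ Set.Ici 0) ∪ Set.Iio 0) := by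
        refine measure_mono fun x hx => ?_
        rcases lt_or_ge x 0 with hx0 | hx0
        · exact Or.inr hx0
        · exact Or.inl ⟨hx, hx0⟩
    _ ≤ expMeasure 1 (A ∩ Set.Ici 0) + expMeasure 1 (Set.Iio 0) := measure_union_le _ _
    _ = expMeasure 1 (A ∩ Set.Ici 0) := by rw [expMeasure_Iio_zero, add_zero]

lemma expMeasure_eq_of_inter {A B : Set ℝ} (hAB : A ∩ Set.Ici 0 = B ∩ Set.Ici 0) :
    expMeasure 1 A = expMeasure 1 B := by
  rw [expMeasure_inter_Ici A, expMeasure_inter_Ici B, hAB]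

lemma expMeasure_Iio (c : ℝ) (hc : 0 ≤ c) :
    expMeasure 1 (Set.Iio c) = ENNReal.ofReal (1 - Real.exp (-c)) := by
  have hIic : expMeasure 1 (Set.Iic c) = ENNReal.ofReal (1 - Real.exp (-c)) := by
    rw [expMeasure_apply _ measurableSet_Iic, lintegral_exponentialPDF_eq_antiDeriv zero_lt_one,
      if_pos hc, one_mul]
  have h1 : expMeasure 1 (Set.Iio c) ≤ ENNReal.ofReal (1 - Real.exp (-c)) := by
    rw [← hIic]; exact measure_mono Set.Iio_subset_Iic_self
  have h2 : ENNReal.ofReal (1 - Real.exp (-c)) ≤ expMeasure 1 (Set.Iio c) := by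
    rw [← hIic]
    calc expMeasure 1 (Set.Iic c) ≤ expMeasure 1 (Set.Iio c ∪ {c}) := by
          refine measure_mono fun x hx => ?_
          rcases (Set.mem_Iic.mp hx).lt_or_eq with h | h
          · exact Or.inl h
          · exact Or.inr h
      _ ≤ expMeasure 1 (Set.Iio c) + expMeasure 1 {c} := measure_union_le _ _
      _ = expMeasure 1 (Set.Iio c) := by rw [expMeasure_singleton, add_zero]
  exact le_antisymm h1 h2

/-- CDF of the weak user's single-round NOMA SINR `(p1·h·λ)/(p2·h·λ + 1)`
for Rayleigh fading (`h ~ Exp(1)`). -/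
theorem sinr_cdf
    {Ω : Type*} [MeasurableSpace Ω] (μ : Measure Ω) [IsProbabilityMeasure μ]
    (h : Ω → ℝ) (hmeas : Measurable h)
    (hlaw : Measure.map h μ = expMeasure 1)
    (p1 p2 lam : ℝ) (hp1 : 0 < p1) (hp2 : 0 < p2) (hlam : 0 < lam)
    (z : ℝ) :
    (0 ≤ z → z < p1 / p2 →
      μ {ω | (p1 * h ω * lam) / (p2 * h ω * lam + 1) < z}
        = ENNReal.ofReal (1 - Real.exp (-(z / ((p1 - z * p2) * lam))))) ∧
    (p1 / p2 ≤ z →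
      μ {ω | (p1 * h ω * lam) / (p2 * h ω * lam + 1) < z} = 1) := by
  set S : Set ℝ := {x | (p1 * x * lam) / (p2 * x * lam + 1) < z} with hSdef
  have hS : MeasurableSet S := by
    apply measurableSet_lt _ measurable_const
    exact (((measurable_const.mul measurable_id).mul measurable_const).div
      (((measurable_const.mul measurable_id).mul measurable_const).add measurable_const))
  have hmap : μ {ω | (p1 * h ω * lam) / (p2 * h ω * lam + 1) < z} = expMeasure 1 S := by
    have : {ω | (p1 * h ω * lam) / (p2 * h ω * lam + 1) < z} = h ⁻¹' S := rfl
    rw [this, ← Measure.map_apply hmeas hS, hlaw]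
  constructor
  · intro hz0 hzlt
    set c : ℝ := z / ((p1 - z * p2) * lam) with hcdef
    have hk : 0 < (p1 - z * p2) * lam := by
      have : z * p2 < p1 := (lt_div_iff₀ hp2).mp hzlt
      have : 0 < p1 - z * p2 := by linarith
      positivity
    have hc : 0 ≤ c := div_nonneg hz0 hk.le
    have hinter : S ∩ Set.Ici 0 = Set.Iio c ∩ Set.Ici 0 := by
      ext x
      simp only [Set.mem_inter_iff, Set.mem_setOf_eq, Set.mem_Iio, Set.mem_Ici, hSdef]
      constructor
      · rintro ⟨hlt, hx0⟩
        refine ⟨?_, hx0⟩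
        have hd : 0 < p2 * x * lam + 1 := by positivity
        rw [div_lt_iff₀ hd] at hlt
        rw [hcdef, lt_div_iff₀ hk]
        nlinarith
      · rintro ⟨hlt, hx0⟩
        refine ⟨?_, hx0⟩
        have hd : 0 < p2 * x * lam + 1 := by positivity
        rw [hcdef, lt_div_iff₀ hk] at hlt
        rw [div_lt_iff₀ hd]
        nlinarith
    rw [hmap, expMeasure_eq_of_inter hinter, expMeasure_Iio c hc]
  · intro hzge
    have hinter : S ∩ Set.Ici 0 = Set.univ ∩ Set.Ici 0 := by
      ext x
      simp only [Set.mem_inter_iff, Set.mem_setOf_eq, Set.mem_Ici, Set.univ_inter,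
        Set.mem_univ, true_and, hSdef]
      refine ⟨fun hx => hx.2, fun hx0 => ⟨?_, hx0⟩⟩
      have hd : 0 < p2 * x * lam + 1 := by positivity
      have hlt : (p1 * x * lam) / (p2 * x * lam + 1) < p1 / p2 := by
        rw [div_lt_div_iff₀ hd hp2]
        nlinarith
      exact hlt.trans_le hzge
    have : IsProbabilityMeasure (expMeasure 1) := isProbabilityMeasure_expMeasure zero_lt_one
    rw [hmap, expMeasure_eq_of_inter hinter]
    exact measure_univ
end

section
/- Let h be exponentially distributed with rate 1 and λ, p1, p2 > 0 with β = p1/p2. The random variable X = (p1·h·λ)/(p2·h·λ + 1) has probability density function f(z) = p1/(λ·(p1 − z·p2)²) · exp(−z/(λ·(p1 − z·p2))) for z ∈ [0, β), and density 0 outside [0, β). -/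
open MeasureTheory ProbabilityTheory Real Set
open scoped ENNReal NNReal

namespace SinrAux

/-- The target pdf. -/
noncomputable def sinrpdf (p1 p2 lam z : ℝ) : ℝ :=
  p1 / (lam * (p1 - z * p2) ^ 2) * Real.exp (-(z / (lam * (p1 - z * p2))))

lemma sinrpdf_nonneg {p1 : ℝ} (hp1 : 0 < p1) (p2 lam z : ℝ) (hlam : 0 < lam) :
    0 ≤ sinrpdf p1 p2 lam z := by
  unfold sinrpdf
  have : 0 ≤ lam * (p1 - z * p2) ^ 2 := by positivity
  positivity

lemma hasDerivAt_F {p1 p2 lam : ℝ} (hp1 : 0 < p1) (hp2 : 0 < p2) (hlam : 0 < lam)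
    {z : ℝ} (hz : z < p1 / p2) :
    HasDerivAt (fun z => 1 - Real.exp (-(z / (lam * (p1 - z * p2)))))
      (sinrpdf p1 p2 lam z) z := by
  have hd : 0 < p1 - z * p2 := by
    have := (lt_div_iff₀ hp2).mp hz
    linarith
  have hden : lam * (p1 - z * p2) ≠ 0 := by positivity
  have hu : HasDerivAt (fun z => z / (lam * (p1 - z * p2)))
      ((1 * (lam * (p1 - z * p2)) - z * (lam * (0 - 1 * p2))) / (lam * (p1 - z * p2)) ^ 2) z := by
    exact (hasDerivAt_id z).div
      ((((hasDerivAt_const z p1).sub ((hasDerivAt_id z).mul_const p2)).const_mul lam)) hden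
  have hF := ((hu.neg).exp).const_sub 1
  refine hF.congr_deriv ?_
  unfold sinrpdf
  have hlam' : lam ≠ 0 := ne_of_gt hlam
  have hd' : p1 - z * p2 ≠ 0 := ne_of_gt hd
  simp only [Pi.neg_apply]
  field_simp
  ring

lemma continuousOn_sinrpdf {p1 p2 lam : ℝ} (hp2 : 0 < p2) (hlam : 0 < lam) {b : ℝ}
    (hb : b < p1 / p2) :
    ContinuousOn (sinrpdf p1 p2 lam) (Icc 0 b) := by
  have hden : ∀ z ∈ Icc (0:ℝ) b, lam * (p1 - z * p2) ^ 2 ≠ 0 := by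
    intro z hz
    have : z < p1 / p2 := lt_of_le_of_lt hz.2 hb
    have hd : 0 < p1 - z * p2 := by
      have := (lt_div_iff₀ hp2).mp this; linarith
    positivity
  have hden2 : ∀ z ∈ Icc (0:ℝ) b, lam * (p1 - z * p2) ≠ 0 := by
    intro z hz
    have : z < p1 / p2 := lt_of_le_of_lt hz.2 hb
    have hd : 0 < p1 - z * p2 := by
      have := (lt_div_iff₀ hp2).mp this; linarith
    positivity
  unfold sinrpdf
  apply ContinuousOn.mul
  · exact ContinuousOn.div continuousOn_const
      (by fun_prop) hden
  · apply Continuous.comp_continuousOn Real.continuous_exp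
    apply ContinuousOn.neg
    exact ContinuousOn.div continuousOn_id (by fun_prop) hden2

lemma cdf_Ioc {p1 p2 lam : ℝ} (hp1 : 0 < p1) (hp2 : 0 < p2) (hlam : 0 < lam)
    {b : ℝ} (hb0 : 0 ≤ b) (hb : b < p1 / p2) :
    ∫⁻ z in Ioc 0 b, ENNReal.ofReal (sinrpdf p1 p2 lam z)
      = ENNReal.ofReal (1 - Real.exp (-(b / (lam * (p1 - b * p2))))) := by
  have hcont : ContinuousOn (sinrpdf p1 p2 lam) (Icc 0 b) := continuousOn_sinrpdf hp2 hlam hb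
  have hint : IntegrableOn (sinrpdf p1 p2 lam) (Ioc 0 b) := by
    exact (hcont.integrableOn_compact isCompact_Icc).mono_set Ioc_subset_Icc_self
  rw [← ofReal_integral_eq_lintegral_ofReal hint
    (ae_of_all _ fun z => sinrpdf_nonneg hp1 p2 lam z hlam)]
  congr 1
  have := intervalIntegral.integral_eq_sub_of_hasDerivAt
    (f := fun z => 1 - Real.exp (-(z / (lam * (p1 - z * p2)))))
    (f' := sinrpdf p1 p2 lam) (a := 0) (b := b)
    (fun x hx => by
      rw [uIcc_of_le hb0] at hx
      exact hasDerivAt_F hp1 hp2 hlam (lt_of_le_of_lt hx.2 hb))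
    (by
      rw [intervalIntegrable_iff, uIoc_of_le hb0]
      exact hint)
  rw [intervalIntegral.integral_of_le hb0] at this
  rw [this]
  simp

end SinrAux

open SinrAux

/-- The single-round NOMA SINR `X = (p1·h·λ)/(p2·h·λ + 1)` with `h ~ Exp(1)` has the
probability density `f(z) = p1/(λ(p1 - z p2)²) · exp(-z/(λ(p1 - z p2)))` on `[0, p1/p2)`
and `0` elsewhere. -/
theorem sinr_pdf
    {Ω : Type*} [MeasurableSpace Ω] (μ : Measure Ω) [IsProbabilityMeasure μ]
    (h : Ω → ℝ) (hmeas : Measurable h)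
    (hlaw : Measure.map h μ = expMeasure 1)
    (p1 p2 lam : ℝ) (hp1 : 0 < p1) (hp2 : 0 < p2) (hlam : 0 < lam) :
    Measure.map (fun ω => (p1 * h ω * lam) / (p2 * h ω * lam + 1)) μ
      = volume.withDensity (fun z =>
          if z ∈ Ico (0 : ℝ) (p1 / p2) then
            ENNReal.ofReal (p1 / (lam * (p1 - z * p2) ^ 2)
              * Real.exp (-(z / (lam * (p1 - z * p2)))))
          else 0) := by
  set β : ℝ := p1 / p2 with hβ
  have hβpos : 0 < β := div_pos hp1 hp2
  set g : ℝ → ℝ := fun x => (p1 * x * lam) / (p2 * x * lam + 1) with hg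
  have hgmeas : Measurable g := by fun_prop
  -- rewrite the LHS as the pushforward of the exponential law under g
  have hmap : Measure.map (fun ω => (p1 * h ω * lam) / (p2 * h ω * lam + 1)) μ
      = Measure.map g (expMeasure 1) := by
    rw [← hlaw, Measure.map_map hgmeas hmeas]
    rfl
  rw [hmap]
  -- density as an indicator
  have hDind : (fun z =>
          if z ∈ Ico (0 : ℝ) β then
            ENNReal.ofReal (p1 / (lam * (p1 - z * p2) ^ 2)
              * Real.exp (-(z / (lam * (p1 - z * p2)))))
          else 0)
      = (Ico (0 : ℝ) β).indicator (fun z => ENNReal.ofReal (sinrpdf p1 p2 lam z)) := by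
    funext z
    simp [Set.indicator, sinrpdf]
  have hexpProb : IsProbabilityMeasure (expMeasure 1) :=
    isProbabilityMeasure_expMeasure one_pos
  have : IsProbabilityMeasure (Measure.map g (expMeasure 1)) :=
    Measure.isProbabilityMeasure_map hgmeas.aemeasurable
  -- expMeasure as lintegral
  have hexpApply : ∀ s : Set ℝ, MeasurableSet s →
      expMeasure 1 s = ∫⁻ x in s, exponentialPDF 1 x := by
    intro s hs
    rw [expMeasure, gammaMeasure, withDensity_apply _ hs]
    rfl
  apply MeasureTheory.Measure.ext_of_Iic
  intro t
  -- LHS value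
  rw [Measure.map_apply hgmeas measurableSet_Iic,
    hexpApply _ (hgmeas measurableSet_Iic),
    withDensity_apply _ measurableSet_Iic, hDind,
    lintegral_indicator measurableSet_Ico _, Measure.restrict_restrict measurableSet_Ico]
  -- preimage description on [0,∞)
  have hpre : ∀ x : ℝ, 0 ≤ x → (g x ≤ t ↔ x * (lam * (p1 - t * p2)) ≤ t) := by
    intro x hx
    have hden : 0 < p2 * x * lam + 1 := by positivity
    rw [hg]
    simp only
    rw [div_le_iff₀ hden]
    constructor <;> intro hh <;> nlinarith
  rcases lt_or_ge t 0 with ht | ht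
  · -- t < 0 : both sides are zero
    have h1 : Ico (0:ℝ) β ∩ Iic t = ∅ := by
      ext x; simp only [mem_inter_iff, mem_Ico, mem_Iic, mem_empty_iff_false, iff_false]
      rintro ⟨⟨hx0, _⟩, hxt⟩; linarith
    have h2 : g ⁻¹' Iic t ∩ Ici 0 = ∅ := by
      ext x
      simp only [mem_inter_iff, mem_preimage, mem_Iic, mem_Ici, mem_empty_iff_false, iff_false]
      rintro ⟨hxt, hx0⟩
      rw [hpre x hx0] at hxt
      have hx1 : 0 ≤ x * (lam * (p1 - t * p2)) := by
        have : 0 < p1 - t * p2 := by nlinarith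
        positivity
      linarith
    rw [h1, setLIntegral_empty]
    -- left side : integral of exponentialPDF over a subset of Iio 0
    have hsub : g ⁻¹' Iic t ⊆ Iio 0 := by
      intro x hx
      by_contra hx0
      rw [mem_Iio, not_lt] at hx0
      have : x ∈ g ⁻¹' Iic t ∩ Ici 0 := ⟨hx, hx0⟩
      rw [h2] at this
      exact this
    refine le_antisymm ?_ (zero_le)
    calc ∫⁻ x in g ⁻¹' Iic t, exponentialPDF 1 x
        ≤ ∫⁻ x in Iio 0, exponentialPDF 1 x :=
          lintegral_mono_set hsub
      _ = 0 := lintegral_exponentialPDF_of_nonpos le_rfl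
  rcases lt_or_ge t β with htβ | htβ
  · -- 0 ≤ t < β
    have hdpos : 0 < p1 - t * p2 := by
      have := (lt_div_iff₀ hp2).mp htβ; linarith
    set c : ℝ := t / (lam * (p1 - t * p2)) with hc
    have hc0 : 0 ≤ c := by positivity
    -- RHS set
    have h1 : Ico (0:ℝ) β ∩ Iic t = Icc 0 t := by
      ext x
      simp only [mem_inter_iff, mem_Ico, mem_Iic, mem_Icc]
      constructor
      · rintro ⟨⟨hx0, _⟩, hxt⟩; exact ⟨hx0, hxt⟩
      · rintro ⟨hx0, hxt⟩; exact ⟨⟨hx0, lt_of_le_of_lt hxt htβ⟩, hxt⟩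
    have h1' : ∫⁻ z in Icc (0:ℝ) t, ENNReal.ofReal (sinrpdf p1 p2 lam z)
        = ∫⁻ z in Ioc (0:ℝ) t, ENNReal.ofReal (sinrpdf p1 p2 lam z) := by
      apply setLIntegral_congr
      exact Ioc_ae_eq_Icc.symm
    rw [h1, h1', cdf_Ioc hp1 hp2 hlam ht htβ]
    -- LHS set
    have h2 : g ⁻¹' Iic t = g ⁻¹' Iic t ∩ Iio 0 ∪ Icc 0 c := by
      ext x
      simp only [mem_union, mem_inter_iff, mem_preimage, mem_Iic, mem_Iio, mem_Icc]
      constructor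
      · intro hx
        rcases lt_or_ge x 0 with hx0 | hx0
        · exact Or.inl ⟨hx, hx0⟩
        · refine Or.inr ⟨hx0, ?_⟩
          rw [hpre x hx0] at hx
          rw [hc, le_div_iff₀ (by positivity)]
          linarith [hx]
      · rintro (⟨hx, _⟩ | ⟨hx0, hxc⟩)
        · exact hx
        · rw [hpre x hx0]
          rw [hc, le_div_iff₀ (by positivity)] at hxc
          linarith
    rw [h2, lintegral_union measurableSet_Icc
      (by
        apply Set.disjoint_left.mpr
        rintro x ⟨-, hx⟩ hx2
        exact absurd hx2.1 (not_le.mpr hx))]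
    have hzero : ∫⁻ x in g ⁻¹' Iic t ∩ Iio 0, exponentialPDF 1 x = 0 := by
      refine le_antisymm ?_ (zero_le)
      calc ∫⁻ x in g ⁻¹' Iic t ∩ Iio 0, exponentialPDF 1 x
          ≤ ∫⁻ x in Iio 0, exponentialPDF 1 x := lintegral_mono_set inter_subset_right
        _ = 0 := lintegral_exponentialPDF_of_nonpos le_rfl
    rw [hzero, zero_add]
    have hIcc : ∫⁻ x in Icc (0:ℝ) c, exponentialPDF 1 x
        = ∫⁻ x in Iic c, exponentialPDF 1 x := by
      rw [lintegral_Iic_eq_lintegral_Iio_add_Icc _ hc0,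
        lintegral_exponentialPDF_of_nonpos le_rfl, zero_add]
    rw [hIcc, lintegral_exponentialPDF_eq_antiDeriv one_pos, if_pos hc0, one_mul]
  · -- t ≥ β : both sides equal 1
    -- RHS
    have h1 : Ico (0:ℝ) β ∩ Iic t = Ico 0 β := by
      apply inter_eq_left.mpr
      intro x hx
      exact le_of_lt (lt_of_lt_of_le hx.2 htβ)
    rw [h1]
    have h1' : ∫⁻ z in Ico (0:ℝ) β, ENNReal.ofReal (sinrpdf p1 p2 lam z)
        = ∫⁻ z in Ioo (0:ℝ) β, ENNReal.ofReal (sinrpdf p1 p2 lam z) := by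
      apply setLIntegral_congr
      exact Ioo_ae_eq_Ico.symm
    -- sequence b n ↑ β
    set b : ℕ → ℝ := fun n => β * (1 - 1 / (n + 2)) with hb
    have hbmem : ∀ n : ℕ, 0 ≤ b n ∧ b n < β := by
      intro n
      have h2 : (0:ℝ) < (n:ℝ) + 2 := by positivity
      have hb' : b n = β - β / ((n:ℝ) + 2) := by rw [hb]; field_simp
      have hq : 0 < β / ((n:ℝ) + 2) := by positivity
      have hq2 : β / ((n:ℝ) + 2) ≤ β := by
        rw [div_le_iff₀ h2]; nlinarith
      rw [hb']
      constructor
      · linarith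
      · linarith
    have hmono : Monotone b := by
      intro m n hmn
      have h2 : (0:ℝ) < (m:ℝ) + 2 := by positivity
      have h3 : (0:ℝ) < (n:ℝ) + 2 := by positivity
      apply mul_le_mul_of_nonneg_left _ hβpos.le
      have : (1:ℝ) / ((n:ℝ) + 2) ≤ 1 / ((m:ℝ) + 2) := by
        apply one_div_le_one_div_of_le h2
        have : (m:ℝ) ≤ (n:ℝ) := Nat.cast_le.mpr hmn
        linarith
      linarith
    have hcover : Ioo (0:ℝ) β = ⋃ n, Ioc 0 (b n) := by
      ext x
      simp only [mem_Ioo, mem_iUnion, mem_Ioc]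
      constructor
      · rintro ⟨hx0, hxβ⟩
        -- choose n with β - x > β/(n+2), i.e. b n ≥ x
        obtain ⟨n, hn⟩ := exists_nat_gt (β / (β - x) - 2)
        refine ⟨n, hx0, ?_⟩
        have hβx : 0 < β - x := by linarith
        have h2 : (0:ℝ) < (n:ℝ) + 2 := by positivity
        have h3 : β / (β - x) < (n:ℝ) + 2 := by linarith
        have h4 : β < ((n:ℝ) + 2) * (β - x) := by
          rw [div_lt_iff₀ hβx] at h3; linarith
        have h5 : β / ((n:ℝ) + 2) < β - x := by
          rw [div_lt_iff₀ h2]; nlinarith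
        have hb' : b n = β - β / ((n:ℝ) + 2) := by
          rw [hb]; field_simp
        rw [hb']
        linarith
      · rintro ⟨n, hx0, hxb⟩
        exact ⟨hx0, lt_of_le_of_lt hxb (hbmem n).2⟩
    -- value at b n
    have hval : ∀ n : ℕ, ∫⁻ z in Ioc 0 (b n), ENNReal.ofReal (sinrpdf p1 p2 lam z)
        = ENNReal.ofReal (1 - Real.exp (-(((n:ℝ) + 1) / (lam * p2)))) := by
      intro n
      rw [cdf_Ioc hp1 hp2 hlam (hbmem n).1 (hbmem n).2]
      have h2 : (0:ℝ) < (n:ℝ) + 2 := by positivity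
      have hd : p1 - b n * p2 = p1 / ((n:ℝ) + 2) := by
        simp only [hb, hβ]
        field_simp
        ring
      have harg : b n / (lam * (p1 - b n * p2)) = ((n:ℝ) + 1) / (lam * p2) := by
        rw [hd]
        simp only [hb, hβ]
        rw [div_eq_div_iff (by positivity) (by positivity)]
        field_simp
        ring
      rw [harg]
    -- put as a measure of a union
    have hν : ∫⁻ z in Ioo (0:ℝ) β, ENNReal.ofReal (sinrpdf p1 p2 lam z)
        = ⨆ n, ∫⁻ z in Ioc 0 (b n), ENNReal.ofReal (sinrpdf p1 p2 lam z) := by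
      have hmeasf : Measurable fun z => ENNReal.ofReal (sinrpdf p1 p2 lam z) := by
        apply Measurable.ennreal_ofReal
        unfold sinrpdf
        fun_prop
      have hmono' : Monotone fun n => Ioc (0:ℝ) (b n) :=
        fun m n hmn => Ioc_subset_Ioc le_rfl (hmono hmn)
      have := Directed.measure_iUnion (μ := volume.withDensity
          (fun z => ENNReal.ofReal (sinrpdf p1 p2 lam z)))
        (s := fun n => Ioc (0:ℝ) (b n)) hmono'.directed_le
      rw [← hcover] at this
      rw [← withDensity_apply _ measurableSet_Ioo, this]
      congr 1
      funext n
      rw [withDensity_apply _ measurableSet_Ioc]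
    rw [h1', hν]
    simp only [hval]
    -- the supremum is 1
    have hsup : (⨆ n : ℕ, ENNReal.ofReal (1 - Real.exp (-(((n:ℝ) + 1) / (lam * p2))))) = 1 := by
      have hm : Monotone fun n : ℕ =>
          ENNReal.ofReal (1 - Real.exp (-(((n:ℝ) + 1) / (lam * p2)))) := by
        intro m n hmn
        apply ENNReal.ofReal_le_ofReal
        have hle : (m:ℝ) ≤ (n:ℝ) := Nat.cast_le.mpr hmn
        have hmn' : ((m:ℝ) + 1) / (lam * p2) ≤ ((n:ℝ) + 1) / (lam * p2) := by
          gcongr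
        have := Real.exp_le_exp.mpr (neg_le_neg hmn')
        linarith
      have htend : Filter.Tendsto
          (fun n : ℕ => ENNReal.ofReal (1 - Real.exp (-(((n:ℝ) + 1) / (lam * p2)))))
          Filter.atTop (nhds (ENNReal.ofReal 1)) := by
        apply ENNReal.tendsto_ofReal
        have h1 : Filter.Tendsto (fun n : ℕ => ((n:ℝ) + 1) / (lam * p2))
            Filter.atTop Filter.atTop := by
          apply Filter.Tendsto.atTop_div_const (by positivity)
          exact Filter.tendsto_atTop_add_const_right _ 1 tendsto_natCast_atTop_atTop
        have h2 := (Real.tendsto_exp_neg_atTop_nhds_zero).comp h1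
        have := Filter.Tendsto.const_sub (1:ℝ) h2
        simpa using this
      have := tendsto_atTop_iSup hm
      have h1 := tendsto_nhds_unique this htend
      rw [h1, ENNReal.ofReal_one]
    rw [hsup]
    -- LHS is 1
    have hsub : Ici (0:ℝ) ⊆ g ⁻¹' Iic t := by
      intro x hx
      rw [mem_preimage, mem_Iic, hpre x hx]
      rcases le_or_gt (p1 - t * p2) 0 with hd | hd
      · have : x * (lam * (p1 - t * p2)) ≤ 0 := by
          apply mul_nonpos_of_nonneg_of_nonpos hx
          exact mul_nonpos_of_nonneg_of_nonpos hlam.le hd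
        linarith
      · exfalso
        rw [hβ, div_le_iff₀ hp2] at htβ
        nlinarith
    refine le_antisymm ?_ ?_
    · calc ∫⁻ x in g ⁻¹' Iic t, exponentialPDF 1 x
          ≤ ∫⁻ x, exponentialPDF 1 x := setLIntegral_le_lintegral _ _
        _ = 1 := lintegral_exponentialPDF_eq_one one_pos
    · calc (1:ℝ≥0∞) = ∫⁻ x, exponentialPDF 1 x :=
            (lintegral_exponentialPDF_eq_one one_pos).symm
        _ = (∫⁻ x in Iio 0, exponentialPDF 1 x) + ∫⁻ x in Ici 0, exponentialPDF 1 x := by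
            rw [show Ici (0:ℝ) = (Iio (0:ℝ))ᶜ from compl_Iio.symm]
            exact (lintegral_add_compl (exponentialPDF 1) measurableSet_Iio).symm
        _ = ∫⁻ x in Ici 0, exponentialPDF 1 x := by
            rw [lintegral_exponentialPDF_of_nonpos le_rfl, zero_add]
        _ ≤ ∫⁻ x in g ⁻¹' Iic t, exponentialPDF 1 x := lintegral_mono_set hsub
end

section
/- Let h₁, …, h_T be i.i.d. Exp(1), λ > 0, and fixed positive constants a₁, …, a_T and γ. Define P(ρ) = Pr( Σ_{t=1}^{T} ρ·a_t·h_t·λ < γ ). Then −lim_{ρ→∞} log P(ρ)/log ρ = T, i.e., T-round HARQ-CC with maximum-ratio combining achieves full diversity order T. -/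
open MeasureTheory ProbabilityTheory Filter Finset

lemma my_expMeasure_Iic {c : ℝ} (hc : 0 ≤ c) :
    expMeasure 1 (Set.Iic c) = ENNReal.ofReal (1 - Real.exp (-c)) := by
  rw [expMeasure, gammaMeasure, withDensity_apply _ measurableSet_Iic]
  have h : ∀ x, gammaPDF 1 1 x = exponentialPDF 1 x := fun x => rfl
  simp_rw [h, lintegral_exponentialPDF_eq_antiDeriv one_pos c, if_pos hc, one_mul]

lemma my_expMeasure_Iio_zero : expMeasure 1 (Set.Iio (0:ℝ)) = 0 := by
  rw [expMeasure, gammaMeasure, withDensity_apply _ measurableSet_Iio]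
  exact lintegral_gammaPDF_of_nonpos le_rfl

lemma my_one_sub_exp_le (x : ℝ) : 1 - Real.exp (-x) ≤ x := by
  have := Real.add_one_le_exp (-x); linarith

lemma my_half_le_one_sub_exp {x : ℝ} (h0 : 0 ≤ x) (h1 : x ≤ 1) :
    x / 2 ≤ 1 - Real.exp (-x) := by
  have h2 : x + 1 ≤ Real.exp x := Real.add_one_le_exp x
  have h3 : Real.exp x * Real.exp (-x) = 1 := by rw [← Real.exp_add]; simp
  have h4 : 0 < Real.exp (-x) := Real.exp_pos _
  nlinarith [mul_nonneg (by linarith : (0:ℝ) ≤ 1 - x/2) (by linarith : 0 ≤ Real.exp x - (x+1)), sq_nonneg x]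

/-- `T`-round HARQ-CC with MRC achieves full diversity order `T`:
`-lim_{ρ→∞} log P(ρ)/log ρ = T`, where
`P(ρ) = Pr(Σ_t ρ a_t h_t λ < γ)` with i.i.d. `h_t ~ Exp(1)`. -/
theorem diversity_order_T
    {Ω : Type*} [MeasurableSpace Ω] (μ : Measure Ω) [IsProbabilityMeasure μ]
    (T : ℕ) (hT : 0 < T) (h : Fin T → Ω → ℝ) (hmeas : ∀ t, Measurable (h t))
    (hindep : iIndepFun h μ)
    (hlaw : ∀ t, Measure.map (h t) μ = expMeasure 1)
    (a : Fin T → ℝ) (ha : ∀ t, 0 < a t) (lam γ : ℝ) (hlam : 0 < lam) (hγ : 0 < γ) :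
    Tendsto (fun ρ : ℝ =>
        - (Real.log (μ {ω | ∑ t, ρ * a t * h t ω * lam < γ}).toReal / Real.log ρ))
      atTop (nhds (T : ℝ)) := by
  have hTR : (0:ℝ) < T := Nat.cast_pos.2 hT
  set P : ℝ → ℝ := fun ρ => (μ {ω | ∑ t, ρ * a t * h t ω * lam < γ}).toReal with hPdef
  -- measure of Iic preimages
  have hmu_Iic : ∀ (t : Fin T) (c : ℝ), 0 ≤ c →
      μ (h t ⁻¹' Set.Iic c) = ENNReal.ofReal (1 - Real.exp (-c)) := by
    intro t c hc
    rw [← Measure.map_apply (hmeas t) measurableSet_Iic, hlaw t, my_expMeasure_Iic hc]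
  have hmu_neg : ∀ t : Fin T, μ (h t ⁻¹' Set.Iio 0) = 0 := by
    intro t
    rw [← Measure.map_apply (hmeas t) measurableSet_Iio, hlaw t, my_expMeasure_Iio_zero]
  have hprod : ∀ c : Fin T → ℝ, (∀ t, 0 ≤ c t) →
      (μ (⋂ t, h t ⁻¹' Set.Iic (c t))).toReal = ∏ t, (1 - Real.exp (-(c t))) := by
    intro c hc
    rw [hindep.meas_iInter (fun t => ⟨Set.Iic (c t), measurableSet_Iic, rfl⟩),
      ENNReal.toReal_prod]
    refine Finset.prod_congr rfl fun t _ => ?_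
    have h1 : Real.exp (-(c t)) ≤ 1 := by
      rw [← Real.exp_zero]; exact Real.exp_le_exp.2 (by linarith [hc t])
    rw [hmu_Iic t _ (hc t), ENNReal.toReal_ofReal (by linarith)]
  -- constants
  set K : Fin T → ℝ := fun t => γ / (2 * T * a t * lam) with hKdef
  have hKpos : ∀ t, 0 < K t := fun t =>
    div_pos hγ (mul_pos (mul_pos (mul_pos two_pos hTR) (ha t)) hlam)
  set C₁ : ℝ := ∏ t, K t / 2 with hC₁def
  set C₂ : ℝ := ∏ t, γ / (a t * lam) with hC₂def
  have hC₁pos : 0 < C₁ := Finset.prod_pos fun t _ => by linarith [hKpos t]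
  have hC₂pos : 0 < C₂ := Finset.prod_pos fun t _ => div_pos hγ (mul_pos (ha t) hlam)
  -- lower bound
  have hlow : ∀ ρ : ℝ, 0 < ρ → (∀ t, K t ≤ ρ) → C₁ / ρ ^ T ≤ P ρ := by
    intro ρ hρ hK
    have hsub : (⋂ t, h t ⁻¹' Set.Iic (K t / ρ)) ⊆ {ω | ∑ t, ρ * a t * h t ω * lam < γ} := by
      intro ω hω
      simp only [Set.mem_iInter, Set.mem_preimage, Set.mem_Iic] at hω
      have hterm : ∀ t, ρ * a t * h t ω * lam ≤ γ / (2 * T) := by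
        intro t
        have h1 : ρ * a t * h t ω * lam ≤ ρ * a t * (K t / ρ) * lam := by
          have h0 := mul_nonneg (le_of_lt (mul_pos (mul_pos hρ (ha t)) hlam))
            (sub_nonneg.2 (hω t))
          nlinarith
        have h2 : ρ * a t * (K t / ρ) * lam = γ / (2 * T) := by
          have ha' := (ha t).ne'
          have hlam' := hlam.ne'
          have hT' := hTR.ne'
          have hρ' := hρ.ne'
          rw [hKdef]; field_simp
        linarith
      have hsum : ∑ t, ρ * a t * h t ω * lam ≤ ∑ _t : Fin T, γ / (2 * T) :=
        Finset.sum_le_sum fun t _ => hterm t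
      have : ∑ _t : Fin T, γ / (2 * T) = γ / 2 := by
        rw [Finset.sum_const, Finset.card_univ, Fintype.card_fin, nsmul_eq_mul]
        field_simp
      simp only [Set.mem_setOf_eq]; linarith
    have h1 : (μ (⋂ t, h t ⁻¹' Set.Iic (K t / ρ))).toReal ≤ P ρ := by
      apply ENNReal.toReal_mono (measure_ne_top μ _) (measure_mono hsub)
    rw [hprod _ (fun t => le_of_lt (div_pos (hKpos t) hρ))] at h1
    have h2 : C₁ / ρ ^ T ≤ ∏ t, (1 - Real.exp (-(K t / ρ))) := by
      have : C₁ / ρ ^ T = ∏ t, (K t / ρ) / 2 := by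
        calc C₁ / ρ ^ T = (∏ t, K t / 2) / ∏ _t : Fin T, ρ := by
              rw [Finset.prod_const, Finset.card_univ, Fintype.card_fin, hC₁def]
          _ = ∏ t, (K t / 2) / ρ := (Finset.prod_div_distrib _ _).symm
          _ = ∏ t, (K t / ρ) / 2 := Finset.prod_congr rfl fun t _ => by ring
      rw [this]
      refine Finset.prod_le_prod (fun t _ => div_nonneg (le_of_lt (div_pos (hKpos t) hρ))
        two_pos.le) (fun t _ => ?_)
      have hx0 : 0 ≤ K t / ρ := le_of_lt (div_pos (hKpos t) hρ)
      have hx1 : K t / ρ ≤ 1 := (div_le_one hρ).2 (hK t)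
      have := my_half_le_one_sub_exp hx0 hx1
      linarith
    linarith
  -- upper bound
  have hup : ∀ ρ : ℝ, 0 < ρ → P ρ ≤ C₂ / ρ ^ T := by
    intro ρ hρ
    set c : Fin T → ℝ := fun t => γ / (a t * lam) / ρ with hcdef
    have hcpos : ∀ t, 0 < c t := fun t => div_pos (div_pos hγ (mul_pos (ha t) hlam)) hρ
    have hsub : {ω | ∑ t, ρ * a t * h t ω * lam < γ} ⊆
        (⋂ t, h t ⁻¹' Set.Iic (c t)) ∪ ⋃ t, h t ⁻¹' Set.Iio 0 := by
      intro ω hω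
      simp only [Set.mem_setOf_eq] at hω
      by_cases hneg : ∀ t, 0 ≤ h t ω
      · left
        simp only [Set.mem_iInter, Set.mem_preimage, Set.mem_Iic]
        intro t
        have hterm : ρ * a t * h t ω * lam < γ := by
          have h1 : ρ * a t * h t ω * lam ≤ ∑ s, ρ * a s * h s ω * lam :=
            Finset.single_le_sum (f := fun s => ρ * a s * h s ω * lam)
              (fun s _ => mul_nonneg (mul_nonneg (mul_nonneg hρ.le (ha s).le) (hneg s))
                hlam.le) (Finset.mem_univ t)
          linarith
        show h t ω ≤ γ / (a t * lam) / ρ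
        rw [div_div, le_div_iff₀ (mul_pos (mul_pos (ha t) hlam) hρ)]
        nlinarith
      · right
        push_neg at hneg
        obtain ⟨t, ht⟩ := hneg
        exact Set.mem_iUnion.2 ⟨t, ht⟩
    have h1 : μ {ω | ∑ t, ρ * a t * h t ω * lam < γ} ≤ μ (⋂ t, h t ⁻¹' Set.Iic (c t)) := by
      calc μ {ω | ∑ t, ρ * a t * h t ω * lam < γ}
          ≤ μ ((⋂ t, h t ⁻¹' Set.Iic (c t)) ∪ ⋃ t, h t ⁻¹' Set.Iio 0) := measure_mono hsub
        _ ≤ μ (⋂ t, h t ⁻¹' Set.Iic (c t)) + μ (⋃ t, h t ⁻¹' Set.Iio 0) := measure_union_le _ _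
        _ = μ (⋂ t, h t ⁻¹' Set.Iic (c t)) := by
            rw [measure_iUnion_null fun t => hmu_neg t, add_zero]
    have h2 : P ρ ≤ (μ (⋂ t, h t ⁻¹' Set.Iic (c t))).toReal :=
      ENNReal.toReal_mono (measure_ne_top μ _) h1
    rw [hprod _ (fun t => le_of_lt (hcpos t))] at h2
    have h3 : ∏ t, (1 - Real.exp (-(c t))) ≤ C₂ / ρ ^ T := by
      have heq : C₂ / ρ ^ T = ∏ t, c t := by
        calc C₂ / ρ ^ T = (∏ t, γ / (a t * lam)) / ∏ _t : Fin T, ρ := by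
              rw [Finset.prod_const, Finset.card_univ, Fintype.card_fin, hC₂def]
          _ = ∏ t, (γ / (a t * lam)) / ρ := (Finset.prod_div_distrib _ _).symm
          _ = ∏ t, c t := rfl
      rw [heq]
      refine Finset.prod_le_prod (fun t _ => ?_) (fun t _ => my_one_sub_exp_le (c t))
      have h1 : Real.exp (-(c t)) ≤ 1 := by
        rw [← Real.exp_zero]; exact Real.exp_le_exp.2 (by linarith [hcpos t])
      linarith
    linarith
  -- squeeze
  have hsq : ∀ᶠ ρ : ℝ in atTop,
      (T : ℝ) - Real.log C₂ / Real.log ρ ≤ -(Real.log (P ρ) / Real.log ρ) ∧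
      -(Real.log (P ρ) / Real.log ρ) ≤ (T : ℝ) - Real.log C₁ / Real.log ρ := by
    have hev : ∀ᶠ ρ : ℝ in atTop, 1 < ρ ∧ ∀ t, K t ≤ ρ :=
      (eventually_gt_atTop 1).and (eventually_all.2 fun t => eventually_ge_atTop (K t))
    filter_upwards [hev] with ρ ⟨hρ1, hρK⟩
    have hρ : 0 < ρ := lt_trans one_pos hρ1
    have hL : 0 < Real.log ρ := Real.log_pos hρ1
    have hlo := hlow ρ hρ hρK
    have hhi := hup ρ hρ
    have hPpos : 0 < P ρ := lt_of_lt_of_le (by positivity) hlo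
    have hloglo : Real.log C₁ - T * Real.log ρ ≤ Real.log (P ρ) := by
      have := Real.log_le_log (by positivity) hlo
      rwa [Real.log_div (ne_of_gt hC₁pos) (by positivity), Real.log_pow] at this
    have hloghi : Real.log (P ρ) ≤ Real.log C₂ - T * Real.log ρ := by
      have := Real.log_le_log hPpos hhi
      rwa [Real.log_div (ne_of_gt hC₂pos) (by positivity), Real.log_pow] at this
    have hLne : Real.log ρ ≠ 0 := hL.ne'
    constructor
    · have hnum : 0 ≤ (Real.log C₂ - ↑T * Real.log ρ - Real.log (P ρ)) / Real.log ρ :=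
        div_nonneg (by linarith) hL.le
      have heq : (Real.log C₂ - ↑T * Real.log ρ - Real.log (P ρ)) / Real.log ρ
          = -(Real.log (P ρ) / Real.log ρ) - ((T:ℝ) - Real.log C₂ / Real.log ρ) := by
        field_simp
        ring
      rw [heq] at hnum
      linarith
    · have hnum : 0 ≤ (Real.log (P ρ) - (Real.log C₁ - ↑T * Real.log ρ)) / Real.log ρ :=
        div_nonneg (by linarith) hL.le
      have heq : (Real.log (P ρ) - (Real.log C₁ - ↑T * Real.log ρ)) / Real.log ρ
          = ((T:ℝ) - Real.log C₁ / Real.log ρ) - -(Real.log (P ρ) / Real.log ρ) := by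
        field_simp
        ring
      rw [heq] at hnum
      linarith
  have hg₁ : Tendsto (fun ρ : ℝ => (T : ℝ) - Real.log C₂ / Real.log ρ) atTop (nhds (T : ℝ)) := by
    have : Tendsto (fun ρ : ℝ => Real.log C₂ / Real.log ρ) atTop (nhds 0) := by
      simpa [div_eq_mul_inv] using
        (tendsto_const_nhds (x := Real.log C₂)).mul Real.tendsto_log_atTop.inv_tendsto_atTop
    simpa using (tendsto_const_nhds (x := (T:ℝ))).sub this
  have hg₂ : Tendsto (fun ρ : ℝ => (T : ℝ) - Real.log C₁ / Real.log ρ) atTop (nhds (T : ℝ)) := by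
    have : Tendsto (fun ρ : ℝ => Real.log C₁ / Real.log ρ) atTop (nhds 0) := by
      simpa [div_eq_mul_inv] using
        (tendsto_const_nhds (x := Real.log C₁)).mul Real.tendsto_log_atTop.inv_tendsto_atTop
    simpa using (tendsto_const_nhds (x := (T:ℝ))).sub this
  exact tendsto_of_tendsto_of_tendsto_of_le_of_le' hg₁ hg₂
    (hsq.mono fun ρ hp => hp.1) (hsq.mono fun ρ hp => hp.2)
end
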